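/- Let n ≥ 1, let μ be a nonzero finite Borel measure on ℝ^{n+1} with compact support, and let I be a nonempty compact subset of (0, ∞). Then the local entropy λ^I(μ) is attained: there exist x̃₀ in the closed convex hull of the support of μ and t̃₀ ∈ I such that F_{x̃₀,t̃₀}(μ) = λ^I(μ). -/

import Mathlib

open MeasureTheory Metric Set

/-- The F-functional `F_{x₀,t₀}(μ) = (4π t₀)^{-n/2} ∫ exp(-‖x-x₀‖²/(4t₀)) dμ(x)`. -/
noncomputable def Ffn (n : ℕ) (μ : Measure (EuclideanSpace ℝ (Fin (n + 1))))
    (x₀ : EuclideanSpace ℝ (Fin (n + 1))) (t₀ : ℝ) : ℝ :=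
  (4 * Real.pi * t₀) ^ (-(n : ℝ) / 2) *
    ∫ x, Real.exp (-‖x - x₀‖ ^ 2 / (4 * t₀)) ∂μ

/-- The local entropy `λ^I(μ) = sup {F_{x₀,t₀}(μ) : x₀ ∈ ℝ^{n+1}, t₀ ∈ I}`. -/
noncomputable def localEntropyR (n : ℕ) (I : Set ℝ)
    (μ : Measure (EuclideanSpace ℝ (Fin (n + 1)))) : ℝ :=
  ⨆ (x₀ : EuclideanSpace ℝ (Fin (n + 1))) (t₀ : I), Ffn n μ x₀ (t₀ : ℝ)

/-- The support of a measure on a metric space: points all of whose neighbourhoods have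
positive measure. -/
def measureSupport {n : ℕ} (μ : Measure (EuclideanSpace ℝ (Fin (n + 1)))) :
    Set (EuclideanSpace ℝ (Fin (n + 1))) :=
  {x | ∀ r : ℝ, 0 < r → 0 < μ (ball x r)}

open RealInnerProductSpace in
theorem stmt_14 (n : ℕ) (hn : 1 ≤ n) (μ : Measure (EuclideanSpace ℝ (Fin (n + 1))))
    [IsFiniteMeasure μ] (hμ : μ ≠ 0)
    (hcpt : ∃ K : Set (EuclideanSpace ℝ (Fin (n + 1))), IsCompact K ∧ μ Kᶜ = 0)
    (I : Set ℝ) (hne : I.Nonempty) (hIcpt : IsCompact I) (hIpos : I ⊆ Ioi (0 : ℝ)) :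
    ∃ x₀ ∈ closure (convexHull ℝ (measureSupport μ)), ∃ t₀ ∈ I,
      Ffn n μ x₀ t₀ = localEntropyR n I μ := by
  classical
  set S := measureSupport μ with hSdef
  set C := closure (convexHull ℝ S) with hCdef
  haveI : Nonempty I := hne.to_subtype
  -- the measure vanishes outside S
  have hSc : μ Sᶜ = 0 := by
    have hchoice : ∀ x : ↥Sᶜ, ∃ r : ℝ, 0 < r ∧ μ (ball (x : EuclideanSpace ℝ (Fin (n + 1))) r) = 0 := by
      rintro ⟨x, hx⟩
      simp only [hSdef, measureSupport, mem_compl_iff, mem_setOf_eq, not_forall] at hx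
      obtain ⟨r, hr, hr0⟩ := hx
      exact ⟨r, hr, by simpa [pos_iff_ne_zero, not_not] using hr0⟩
    choose r hrpos hr0 using hchoice
    obtain ⟨T, hTc, hTU⟩ := TopologicalSpace.isOpen_iUnion_countable
      (fun x : ↥Sᶜ => ball (x : EuclideanSpace ℝ (Fin (n + 1))) (r x)) (fun x => isOpen_ball)
    have hsub : Sᶜ ⊆ ⋃ x ∈ T, ball (x : EuclideanSpace ℝ (Fin (n + 1))) (r x) := by
      rw [hTU]
      intro x hx
      exact mem_iUnion.2 ⟨⟨x, hx⟩, mem_ball_self (hrpos ⟨x, hx⟩)⟩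
    refine measure_mono_null hsub ?_
    exact (measure_biUnion_null_iff hTc).2 fun x _ => hr0 x
  have hSne : S.Nonempty := by
    by_contra h
    rw [not_nonempty_iff_eq_empty] at h
    apply hμ
    rw [← Measure.measure_univ_eq_zero]
    simpa [h] using hSc
  obtain ⟨K, hKcpt, hKc⟩ := hcpt
  have hSK : S ⊆ K := by
    intro x hx
    by_contra hxK
    obtain ⟨ε, hε, hball⟩ := Metric.isOpen_iff.1 hKcpt.isClosed.isOpen_compl x hxK
    exact absurd (measure_mono_null hball hKc) (hx ε hε).ne'
  -- C is compact, convex, nonempty, complete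
  have hCcpt : IsCompact C :=
    (isBounded_convexHull.2 (hKcpt.isBounded.subset hSK)).isCompact_closure
  have hCconv : Convex ℝ C := (convex_convexHull ℝ S).closure
  have hCne : C.Nonempty := hSne.mono ((subset_convexHull ℝ S).trans subset_closure)
  have hCcomplete : IsComplete C := hCcpt.isClosed.isComplete
  have haeC : ∀ᵐ x ∂μ, x ∈ C := by
    rw [ae_iff]
    refine measure_mono_null (fun x hx => ?_) hSc
    exact fun hxS => hx ((subset_convexHull ℝ S).trans subset_closure hxS)
  -- integrability
  have hint : ∀ (x₀ : EuclideanSpace ℝ (Fin (n + 1))) (t : ℝ), 0 < t →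
      Integrable (fun x => Real.exp (-‖x - x₀‖ ^ 2 / (4 * t))) μ := by
    intro x₀ t ht
    refine (integrable_const (1 : ℝ)).mono' ?_ ?_
    · exact (Continuous.aestronglyMeasurable (by fun_prop))
    · filter_upwards with x
      rw [Real.norm_eq_abs, abs_of_pos (Real.exp_pos _)]
      apply Real.exp_le_one_iff.2
      apply div_nonpos_of_nonpos_of_nonneg
      · simpa using sq_nonneg ‖x - x₀‖
      · positivity
  -- the projection inequality: moving x₀ to its projection on C increases Ffn
  have hFle : ∀ (u : EuclideanSpace ℝ (Fin (n + 1))), ∃ v ∈ C, ∀ t ∈ I, Ffn n μ u t ≤ Ffn n μ v t := by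
    intro u
    obtain ⟨v, hvC, hmin⟩ := exists_norm_eq_iInf_of_complete_convex hCne hCcomplete hCconv u
    have hinner := (norm_eq_iInf_iff_real_inner_le_zero hCconv hvC).1 hmin
    have hdist : ∀ w ∈ C, ‖w - v‖ ≤ ‖w - u‖ := by
      intro w hw
      have h1 : (inner ℝ (u - v) (w - v) : ℝ) ≤ 0 := hinner w hw
      have h2 : ‖w - u‖ ^ 2 = ‖w - v‖ ^ 2 - 2 * (inner ℝ (w - v) (u - v) : ℝ) + ‖u - v‖ ^ 2 := by
        have := norm_sub_sq_real (w - v) (u - v)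
        simpa [sub_sub_sub_cancel_right] using this
      rw [real_inner_comm] at h2
      nlinarith [norm_nonneg (w - v), norm_nonneg (w - u), sq_nonneg (‖u - v‖)]
    refine ⟨v, hvC, fun t ht => ?_⟩
    have htpos : 0 < t := hIpos ht
    have hI : (∫ x, Real.exp (-‖x - u‖ ^ 2 / (4 * t)) ∂μ)
        ≤ ∫ x, Real.exp (-‖x - v‖ ^ 2 / (4 * t)) ∂μ := by
      refine integral_mono_ae (hint u t htpos) (hint v t htpos) ?_
      filter_upwards [haeC] with x hx
      have h3 : ‖x - v‖ ≤ ‖x - u‖ := hdist x hx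
      apply Real.exp_le_exp.2
      rw [div_le_div_iff_of_pos_right (by positivity : (0:ℝ) < 4 * t)]
      nlinarith [norm_nonneg (x - v), norm_nonneg (x - u)]
    simp only [Ffn]
    apply mul_le_mul_of_nonneg_left hI
    have : (0:ℝ) < 4 * Real.pi * t := by positivity
    positivity
  -- continuity of Ffn on C ×ˢ I
  have hcont : ContinuousOn (fun q : EuclideanSpace ℝ (Fin (n + 1)) × ℝ => Ffn n μ q.1 q.2) (C ×ˢ I) := by
    intro p hp
    have htpos : 0 < p.2 := hIpos hp.2
    apply ContinuousAt.continuousWithinAt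
    have h1 : ContinuousAt (fun q : EuclideanSpace ℝ (Fin (n + 1)) × ℝ => (4 * Real.pi * q.2) ^ (-(n:ℝ)/2)) p := by
      apply ContinuousAt.rpow_const
      · exact (continuous_const.mul continuous_snd).continuousAt
      · left; positivity
    have hev : ∀ᶠ q : EuclideanSpace ℝ (Fin (n + 1)) × ℝ in nhds p, 0 < q.2 := by
      have : IsOpen {q : EuclideanSpace ℝ (Fin (n + 1)) × ℝ | 0 < q.2} := isOpen_lt continuous_const continuous_snd
      exact this.mem_nhds htpos
    have h2 : ContinuousAt
        (fun q : EuclideanSpace ℝ (Fin (n + 1)) × ℝ => ∫ x, Real.exp (-‖x - q.1‖ ^ 2 / (4 * q.2)) ∂μ) p := by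
      apply continuousAt_of_dominated (bound := fun _ : EuclideanSpace ℝ (Fin (n + 1)) => (1 : ℝ))
      · filter_upwards with q
        exact Continuous.aestronglyMeasurable (by fun_prop)
      · filter_upwards [hev] with q hq
        filter_upwards with x
        rw [Real.norm_eq_abs, abs_of_pos (Real.exp_pos _)]
        apply Real.exp_le_one_iff.2
        apply div_nonpos_of_nonpos_of_nonneg
        · simpa using sq_nonneg ‖x - q.1‖
        · positivity
      · exact integrable_const 1
      · filter_upwards with x
        apply Real.continuous_exp.continuousAt.comp
        apply ContinuousAt.div
        · fun_prop
        · fun_prop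
        · positivity
    exact h1.mul h2
  -- maximize on the compact set C ×ˢ I
  obtain ⟨p, hpmem, hpmax⟩ := (hCcpt.prod hIcpt).exists_isMaxOn
    (hCne.prod hne) hcont
  set M := Ffn n μ p.1 p.2 with hM
  have hkey : ∀ (x₀ : EuclideanSpace ℝ (Fin (n + 1))) (t : ℝ), t ∈ I → Ffn n μ x₀ t ≤ M := by
    intro x₀ t ht
    obtain ⟨v, hvC, hle⟩ := hFle x₀
    exact (hle t ht).trans (hpmax (Set.mk_mem_prod hvC ht))
  refine ⟨p.1, hpmem.1, p.2, hpmem.2, ?_⟩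
  have hbdd : ∀ x₀ : EuclideanSpace ℝ (Fin (n + 1)), BddAbove (Set.range fun t : I => Ffn n μ x₀ (t : ℝ)) := by
    intro x₀
    exact ⟨M, by rintro _ ⟨t, rfl⟩; exact hkey x₀ t t.2⟩
  have hbdd2 : BddAbove (Set.range fun x₀ : EuclideanSpace ℝ (Fin (n + 1)) => ⨆ t : I, Ffn n μ x₀ (t : ℝ)) := by
    refine ⟨M, ?_⟩
    rintro _ ⟨x₀, rfl⟩
    exact ciSup_le fun t => hkey x₀ t t.2
  rw [show localEntropyR n I μ =
      ⨆ (x₀ : EuclideanSpace ℝ (Fin (n + 1))) (t : I), Ffn n μ x₀ (t : ℝ) from rfl]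
  apply le_antisymm
  · calc M ≤ ⨆ t : I, Ffn n μ p.1 (t : ℝ) := le_ciSup (hbdd p.1) ⟨p.2, hpmem.2⟩
      _ ≤ localEntropyR n I μ := le_ciSup hbdd2 p.1
  · exact ciSup_le fun x₀ => ciSup_le fun t => hkey x₀ t t.2
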